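/- Let (μ_t)_{t∈ℝ} be a Hopf deformation of a Hopf algebra B with deformed antipodes S_t (the convolution inverses of id w.r.t. ⋆_t). Then each S_t is unique, satisfies S_t(1) = 1, and S_t∘μ_{−t} = μ_t∘(S_t⊗S_t)∘τ, i.e., S_t: B_{−t} → B_t is an algebra antihomomorphism. -/

import Mathlib

open TensorProduct Coalgebra

variable {B : Type} [Ring B] [HopfAlgebra ℂ B]

/-- The comultiplication `Λ = (id ⊗ τ ⊗ id) ∘ (Δ ⊗ Δ)` of `B ⊗ B`. -/
noncomputable def Lam : B ⊗[ℂ] B →ₗ[ℂ] (B ⊗[ℂ] B) ⊗[ℂ] (B ⊗[ℂ] B) :=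
  (TensorProduct.tensorTensorTensorComm ℂ B B B B).toLinearMap ∘ₗ
    TensorProduct.map (comul (R := ℂ)) (comul (R := ℂ))

/-- The map `b ↦ δ(b)·1 : B → B`. -/
noncomputable def unitCounit : B →ₗ[ℂ] B :=
  Algebra.linearMap ℂ B ∘ₗ counit (R := ℂ)

section Conv
variable {C : Type} [AddCommGroup C] [Module ℂ C] [Coalgebra ℂ C]

/-- Convolution of linear maps `C →ₗ B` w.r.t. a product `m` on `B`. -/
noncomputable def conv (m : B ⊗[ℂ] B →ₗ[ℂ] B) (F G : C →ₗ[ℂ] B) : C →ₗ[ℂ] B :=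
  m ∘ₗ TensorProduct.map F G ∘ₗ comul (R := ℂ)

/-- The convolution unit `x ↦ ε(x) • 1`. -/
noncomputable def cunit : C →ₗ[ℂ] B :=
  LinearMap.toSpanSingleton ℂ B 1 ∘ₗ counit (R := ℂ)

lemma conv_cunit_left (m : B ⊗[ℂ] B →ₗ[ℂ] B) (hm : ∀ a : B, m ((1:B) ⊗ₜ[ℂ] a) = a)
    (F : C →ₗ[ℂ] B) : conv m cunit F = F := by
  ext x
  have h1 : TensorProduct.map (cunit (C := C)) F
      = TensorProduct.map (LinearMap.toSpanSingleton ℂ B 1) F ∘ₗ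
        (counit (R := ℂ)).rTensor C := by
    apply TensorProduct.ext'
    intro x y
    simp [cunit]
  simp only [conv, LinearMap.comp_apply, h1, rTensor_counit_comul, TensorProduct.map_tmul,
    LinearMap.toSpanSingleton_apply, one_smul, LinearMap.id_apply, hm]

lemma conv_cunit_right (m : B ⊗[ℂ] B →ₗ[ℂ] B) (hm : ∀ a : B, m (a ⊗ₜ[ℂ] (1:B)) = a)
    (F : C →ₗ[ℂ] B) : conv m F cunit = F := by
  ext x
  have h1 : TensorProduct.map F (cunit (C := C))
      = TensorProduct.map F (LinearMap.toSpanSingleton ℂ B 1) ∘ₗ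
        (counit (R := ℂ)).lTensor C := by
    apply TensorProduct.ext'
    intro x y
    simp [cunit]
  simp only [conv, LinearMap.comp_apply, h1, lTensor_counit_comul, TensorProduct.map_tmul,
    LinearMap.toSpanSingleton_apply, one_smul, LinearMap.id_apply, hm]

lemma conv_assoc (m : B ⊗[ℂ] B →ₗ[ℂ] B)
    (hm : ∀ a b c : B, m (m (a ⊗ₜ[ℂ] b) ⊗ₜ[ℂ] c) = m (a ⊗ₜ[ℂ] m (b ⊗ₜ[ℂ] c)))
    (F G H : C →ₗ[ℂ] B) : conv m (conv m F G) H = conv m F (conv m G H) := by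
  have hmassoc : m ∘ₗ TensorProduct.map m LinearMap.id
      = m ∘ₗ TensorProduct.map LinearMap.id m ∘ₗ (TensorProduct.assoc ℂ B B B).toLinearMap := by
    apply TensorProduct.ext_threefold
    intro a b c
    simp [hm a b c]
  have h1 : TensorProduct.map (conv m F G) H
      = TensorProduct.map m LinearMap.id ∘ₗ
        TensorProduct.map (TensorProduct.map F G) H ∘ₗ (comul (R := ℂ) (A := C)).rTensor C := by
    apply TensorProduct.ext'
    intro x y
    simp [conv]
  have h2 : TensorProduct.map F (conv m G H)
      = TensorProduct.map LinearMap.id m ∘ₗ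
        TensorProduct.map F (TensorProduct.map G H) ∘ₗ (comul (R := ℂ) (A := C)).lTensor C := by
    apply TensorProduct.ext'
    intro x y
    simp [conv]
  ext x
  show (m ∘ₗ TensorProduct.map (conv m F G) H ∘ₗ comul (R := ℂ)) x
      = (m ∘ₗ TensorProduct.map F (conv m G H) ∘ₗ comul (R := ℂ)) x
  simp only [LinearMap.comp_apply, h1, h2]
  have h3 := LinearMap.congr_fun hmassoc
    ((TensorProduct.map (TensorProduct.map F G) H)
      (((comul (R := ℂ) (A := C))).rTensor C (comul (R := ℂ) x)))
  simp only [LinearMap.comp_apply, LinearEquiv.coe_coe] at h3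
  rw [h3, ← TensorProduct.map_map_assoc, coassoc_apply]

end Conv

lemma unitCounit_eq_cunit : (unitCounit : B →ₗ[ℂ] B) = cunit := by
  ext x
  simp [unitCounit, cunit, Algebra.algebraMap_eq_smul_one]

lemma Lam_eq_comul : (Lam (B := B)) = comul (R := ℂ) (A := B ⊗[ℂ] B) := rfl

/-- Let `(μ_t)_{t∈ℝ}` be a Hopf deformation of the Hopf algebra `B` with deformed
antipodes `S_t`, i.e. `μ_t ∘ (S_t ⊗ id) ∘ Δ = μ_t ∘ (id ⊗ S_t) ∘ Δ = δ(·)1`.  Then each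
`S_t` is unique (it is the two-sided `⋆_t`-convolution inverse of the identity),
`S_t(1) = 1`, and `S_t ∘ μ_{−t} = μ_t ∘ (S_t ⊗ S_t) ∘ τ`, i.e. `S_t : B_{−t} → B_t` is an
algebra antihomomorphism. -/
theorem stmt10 (μt : ℝ → (B ⊗[ℂ] B →ₗ[ℂ] B))
    (hzero : μt 0 = LinearMap.mul' ℂ B)
    (hassoc : ∀ (t : ℝ) (a b c : B),
      μt t (μt t (a ⊗ₜ[ℂ] b) ⊗ₜ[ℂ] c) = μt t (a ⊗ₜ[ℂ] μt t (b ⊗ₜ[ℂ] c)))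
    (hone : ∀ (t : ℝ) (a : B), μt t ((1 : B) ⊗ₜ[ℂ] a) = a ∧ μt t (a ⊗ₜ[ℂ] (1 : B)) = a)
    (hcompat : ∀ t s : ℝ,
      comul (R := ℂ) ∘ₗ μt (t + s) = TensorProduct.map (μt t) (μt s) ∘ₗ Lam)
    (hcont : ∀ x : B ⊗[ℂ] B, Continuous fun t : ℝ => counit (R := ℂ) (μt t x))
    (S : ℝ → (B →ₗ[ℂ] B))
    (hS : ∀ t : ℝ,
      μt t ∘ₗ TensorProduct.map (S t) LinearMap.id ∘ₗ comul (R := ℂ) = unitCounit ∧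
      μt t ∘ₗ TensorProduct.map LinearMap.id (S t) ∘ₗ comul (R := ℂ) = unitCounit) :
    (∀ (t : ℝ) (S' : B →ₗ[ℂ] B),
        (μt t ∘ₗ TensorProduct.map S' LinearMap.id ∘ₗ comul (R := ℂ) = unitCounit ∧
         μt t ∘ₗ TensorProduct.map LinearMap.id S' ∘ₗ comul (R := ℂ) = unitCounit) →
        S' = S t) ∧
    (∀ t : ℝ, S t 1 = 1) ∧
    (∀ t : ℝ, S t ∘ₗ μt (-t)
      = μt t ∘ₗ TensorProduct.map (S t) (S t) ∘ₗ (TensorProduct.comm ℂ B B).toLinearMap) := by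
  refine ⟨?_, ?_, ?_⟩
  · -- uniqueness
    rintro t S' ⟨h1, h2⟩
    have e1 : conv (μt t) S' LinearMap.id = cunit := by
      rw [← unitCounit_eq_cunit]; exact h1
    have e2 : conv (μt t) LinearMap.id (S t) = cunit := by
      rw [← unitCounit_eq_cunit]; exact (hS t).2
    calc S' = conv (μt t) S' cunit := (conv_cunit_right (μt t) (fun a => (hone t a).2) S').symm
      _ = conv (μt t) S' (conv (μt t) LinearMap.id (S t)) := by rw [e2]
      _ = conv (μt t) (conv (μt t) S' LinearMap.id) (S t) :=
          (conv_assoc (μt t) (hassoc t) S' LinearMap.id (S t)).symm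
      _ = conv (μt t) cunit (S t) := by rw [e1]
      _ = S t := conv_cunit_left (μt t) (fun a => (hone t a).1) (S t)
  · -- S t 1 = 1
    intro t
    have h := LinearMap.congr_fun (hS t).1 (1 : B)
    simp only [LinearMap.comp_apply, Bialgebra.comul_one, Algebra.TensorProduct.one_def,
      TensorProduct.map_tmul, LinearMap.id_apply, unitCounit, Algebra.linearMap_apply,
      Bialgebra.counit_one, map_one] at h
    rwa [(hone t (S t 1)).2] at h
  · -- antihomomorphism
    intro t
    set F := S t ∘ₗ μt (-t) with hF
    set G := μt t ∘ₗ TensorProduct.map (S t) (S t) ∘ₗ (TensorProduct.comm ℂ B B).toLinearMap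
      with hG
    have ha : conv (μt t) F (μt t) = cunit := by
      have hmc : TensorProduct.map (μt (-t)) (μt t) ∘ₗ comul (R := ℂ) (A := B ⊗[ℂ] B)
          = comul (R := ℂ) ∘ₗ LinearMap.mul' ℂ B := by
        have h := hcompat (-t) t
        rw [neg_add_cancel, hzero] at h
        exact h.symm
      have hcm : unitCounit ∘ₗ LinearMap.mul' ℂ B = cunit (C := B ⊗[ℂ] B) := by
        apply TensorProduct.ext'
        intro a b
        simp [unitCounit, cunit, Algebra.algebraMap_eq_smul_one,
          TensorProduct.counit_tmul, mul_smul, mul_comm]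
      have hmap : TensorProduct.map F (μt t)
          = TensorProduct.map (S t) LinearMap.id ∘ₗ TensorProduct.map (μt (-t)) (μt t) := by
        apply TensorProduct.ext'
        intro x y
        simp [hF]
      apply LinearMap.ext
      intro z
      show μt t ((TensorProduct.map F (μt t)) (comul (R := ℂ) z)) = cunit z
      rw [LinearMap.congr_fun hmap (comul (R := ℂ) z)]
      have e1 := LinearMap.congr_fun hmc z
      have e2 := LinearMap.congr_fun (hS t).1 (LinearMap.mul' ℂ B z)
      have e3 := LinearMap.congr_fun hcm z
      simp only [LinearMap.comp_apply] at e1 e2 e3 ⊢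
      rw [e1, e2, e3]
    have hb : conv (μt t) (μt t) G = cunit := by
      apply TensorProduct.ext'
      intro a b
      set ra := ℛ ℂ a with hra
      set rb := ℛ ℂ b with hrb
      have hSa : ∑ i ∈ ra.index, μt t (ra.left i ⊗ₜ[ℂ] S t (ra.right i))
          = counit (R := ℂ) a • (1 : B) := by
        have h := LinearMap.congr_fun (hS t).2 a
        rw [LinearMap.comp_apply, LinearMap.comp_apply, ← ra.eq] at h
        simpa [unitCounit, Algebra.algebraMap_eq_smul_one] using h
      have hSb : ∑ j ∈ rb.index, μt t (rb.left j ⊗ₜ[ℂ] S t (rb.right j))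
          = counit (R := ℂ) b • (1 : B) := by
        have h := LinearMap.congr_fun (hS t).2 b
        rw [LinearMap.comp_apply, LinearMap.comp_apply, ← rb.eq] at h
        simpa [unitCounit, Algebra.algebraMap_eq_smul_one] using h
      show μt t ((TensorProduct.map (μt t) G) (comul (R := ℂ) (a ⊗ₜ[ℂ] b))) = cunit (a ⊗ₜ[ℂ] b)
      have hcab : comul (R := ℂ) (a ⊗ₜ[ℂ] b)
          = ∑ i ∈ ra.index, ∑ j ∈ rb.index,
              (ra.left i ⊗ₜ[ℂ] rb.left j) ⊗ₜ[ℂ] (ra.right i ⊗ₜ[ℂ] rb.right j) := by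
        rw [← Lam_eq_comul]
        simp only [Lam, LinearMap.comp_apply, TensorProduct.map_tmul, ← ra.eq, ← rb.eq,
          TensorProduct.sum_tmul, TensorProduct.tmul_sum, map_sum, LinearEquiv.coe_coe,
          tensorTensorTensorComm_tmul]
        rw [Finset.sum_comm]
      rw [hcab]
      simp only [map_sum, TensorProduct.map_tmul]
      have hGapp : ∀ x y : B, G (x ⊗ₜ[ℂ] y) = μt t (S t y ⊗ₜ[ℂ] S t x) := by
        intro x y; simp [hG]
      have key : ∀ i ∈ ra.index, ∑ j ∈ rb.index,
          μt t (μt t (ra.left i ⊗ₜ[ℂ] rb.left j) ⊗ₜ[ℂ]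
            G (ra.right i ⊗ₜ[ℂ] rb.right j))
          = counit (R := ℂ) b • μt t (ra.left i ⊗ₜ[ℂ] S t (ra.right i)) := by
        intro i _
        have hL : ∀ j ∈ rb.index,
            μt t (μt t (ra.left i ⊗ₜ[ℂ] rb.left j) ⊗ₜ[ℂ] G (ra.right i ⊗ₜ[ℂ] rb.right j))
            = (μt t ∘ₗ TensorProduct.mk ℂ B B (ra.left i) ∘ₗ μt t ∘ₗ
                (TensorProduct.mk ℂ B B).flip (S t (ra.right i)))
              (μt t (rb.left j ⊗ₜ[ℂ] S t (rb.right j))) := by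
          intro j _
          simp only [hGapp, LinearMap.comp_apply, TensorProduct.mk_apply, LinearMap.flip_apply]
          rw [hassoc t, ← hassoc t (rb.left j)]
        rw [Finset.sum_congr rfl hL, ← map_sum, hSb]
        simp only [map_smul, LinearMap.comp_apply, TensorProduct.mk_apply, LinearMap.flip_apply]
        rw [(hone t (S t (ra.right i))).1]
      rw [Finset.sum_congr rfl key, ← Finset.smul_sum, hSa]
      simp [cunit, TensorProduct.counit_tmul, smul_smul, mul_comm]
    calc F = conv (μt t) F cunit := (conv_cunit_right (μt t) (fun a => (hone t a).2) F).symm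
      _ = conv (μt t) F (conv (μt t) (μt t) G) := by rw [hb]
      _ = conv (μt t) (conv (μt t) F (μt t)) G :=
          (conv_assoc (μt t) (hassoc t) F (μt t) G).symm
      _ = conv (μt t) cunit G := by rw [ha]
      _ = G := conv_cunit_left (μt t) (fun a => (hone t a).1) G
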